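/- A bounded open set Ω ⊂ C^n that is completely circled about the origin (i.e., w ∈ Ω and |λ| ≤ 1, λ ∈ C, implies λw ∈ Ω) and hypoconvex (its complement is a union of complex hyperplanes of complex dimension n-1) is convex, provided it is additionally assumed that for every boundary point p there is a complex hyperplane through p missing Ω. -/
import Mathlib


open Metric

/-- A bounded open subset of `ℂⁿ` that is completely circled about the origin and hypoconvex
(its complement is a union of affine complex hyperplanes), such that moreover every boundary
point lies on a complex hyperplane missing the set, is convex. -/
theorem stmt6 {n : ℕ} (Ω : Set (EuclideanSpace ℂ (Fin n)))
    (hopen : IsOpen Ω) (hbdd : Bornology.IsBounded Ω)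
    (hcircled : ∀ w ∈ Ω, ∀ l : ℂ, ‖l‖ ≤ 1 → l • w ∈ Ω)
    (hhypo : ∀ p ∉ Ω, ∃ φ : EuclideanSpace ℂ (Fin n) →ₗ[ℂ] ℂ,
      φ ≠ 0 ∧ ∀ w ∈ Ω, φ w ≠ φ p)
    (hbdry : ∀ p ∈ frontier Ω, ∃ φ : EuclideanSpace ℂ (Fin n) →ₗ[ℂ] ℂ,
      φ ≠ 0 ∧ ∀ w ∈ Ω, φ w ≠ φ p) :
    Convex ℝ Ω := by
  rcases Set.eq_empty_or_nonempty Ω with h | ⟨w0, hw0⟩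
  · rw [h]; exact convex_empty
  have h0 : (0 : EuclideanSpace ℂ (Fin n)) ∈ Ω := by
    simpa using hcircled w0 hw0 0 (by simp)
  intro x hx y hy a b ha hb hab
  by_contra hz
  obtain ⟨φ, hφ, hsep⟩ := hhypo _ hz
  set p := a • x + b • y with hp
  have hp0 : φ p ≠ 0 := fun h => hsep 0 h0 (by simp [h])
  have key : ∀ w ∈ Ω, ‖φ w‖ < ‖φ p‖ := by
    intro w hw
    by_contra hle
    push_neg at hle
    have hwne : φ w ≠ 0 := by
      intro h
      rw [h, norm_zero] at hle
      exact hp0 (norm_le_zero_iff.mp hle)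
    have hl : ‖φ p / φ w‖ ≤ 1 := by
      rw [norm_div]
      exact div_le_one_of_le₀ hle (norm_nonneg _)
    refine hsep _ (hcircled w hw _ hl) ?_
    rw [map_smul, smul_eq_mul, div_mul_cancel₀ _ hwne]
  have hxw := key x hx
  have hyw := key y hy
  have hmax : max ‖φ x‖ ‖φ y‖ < ‖φ p‖ := max_lt hxw hyw
  have hcalc : ‖φ p‖ ≤ max ‖φ x‖ ‖φ y‖ := by
    have hmap : φ p = (a : ℂ) • φ x + (b : ℂ) • φ y := by
      simp [hp, map_add, LinearMap.map_smul_of_tower, Complex.coe_smul]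
    calc ‖φ p‖ ≤ ‖(a : ℂ) • φ x‖ + ‖(b : ℂ) • φ y‖ := by
            rw [hmap]; exact norm_add_le _ _
      _ = a * ‖φ x‖ + b * ‖φ y‖ := by
            simp [norm_smul, abs_of_nonneg ha, abs_of_nonneg hb]
      _ ≤ a * max ‖φ x‖ ‖φ y‖ + b * max ‖φ x‖ ‖φ y‖ := by
            gcongr
            exacts [le_max_left _ _, le_max_right _ _]
      _ = max ‖φ x‖ ‖φ y‖ := by rw [← add_mul, hab, one_mul]
  exact absurd hcalc (not_le.mpr hmax)
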